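/- For every numeric planning problem Π, the standard encoding Π^S of Π is correct: for every bound n ≥ 0, every action sequence in (Π^S_n)^{−1} is a valid plan for Π. -/

import Mathlib

open scoped Classical

namespace PatternPlanning

/-! ## Numeric planning problems -/

/-- A linear expression `∑ w, coeff w * w + const` over the numeric variables `VN`. -/
structure LinExpr (VN : Type) where
  coeff : VN → ℚ
  const : ℚ

/-- Value of a linear expression under a numeric valuation. -/
def LinExpr.eval {VN : Type} [Fintype VN] (e : LinExpr VN) (ν : VN → ℚ) : ℚ :=
  (∑ w, e.coeff w * ν w) + e.const

/-- The comparison operators `≥ , > , =` of numeric conditions `ψ ⊵ 0`. -/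
inductive CompOp : Type
  | ge | gt | eq

/-- `op.holds q` means `q ⊵ 0`. -/
def CompOp.holds : CompOp → ℚ → Prop
  | .ge, q => 0 ≤ q
  | .gt, q => 0 < q
  | .eq, q => q = 0

/-- A numeric condition `ψ ⊵ 0`. -/
structure NumCond (VN : Type) where
  expr : LinExpr VN
  op : CompOp

def NumCond.holds {VN : Type} [Fintype VN] (c : NumCond VN) (ν : VN → ℚ) : Prop :=
  c.op.holds (c.expr.eval ν)

/-- A propositional condition `v = ⊤` or `v = ⊥`. -/
inductive PropCond (VB : Type)
  | isTrue (v : VB)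
  | isFalse (v : VB)

def PropCond.holds {VB : Type} : PropCond VB → (VB → Bool) → Prop
  | .isTrue v, β => β v = true
  | .isFalse v, β => β v = false

/-- An action: propositional and numeric preconditions, Boolean effects `v := ⊤/⊥`
and numeric effects `w := ψ` (each variable assigned at most once, enforced by
the functional representation of the effects). -/
structure Act (VB VN : Type) where
  preB : List (PropCond VB)
  preN : List (NumCond VN)
  effB : VB → Option Bool
  effN : VN → Option (LinExpr VN)

def Act.assignsB {VB VN : Type} (a : Act VB VN) (v : VB) : Prop := a.effB v ≠ none
def Act.assignsN {VB VN : Type} (a : Act VB VN) (x : VN) : Prop := a.effN x ≠ none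

/-- The effect `x := e` is a linear increment `x += ψ` : `e = x + ψ` with `ψ` not
containing any variable assigned by `a`. -/
def Act.isIncr {VB VN : Type} (a : Act VB VN) (x : VN) (e : LinExpr VN) : Prop :=
  e.coeff x = 1 ∧ ∀ y, a.assignsN y → y ≠ x → e.coeff y = 0

/-- The increment part `ψ` of a linear increment `x := x + ψ`. -/
noncomputable def incrPart {VN : Type} (e : LinExpr VN) (x : VN) : LinExpr VN :=
  ⟨Function.update e.coeff x 0, e.const⟩

/-- The (general) assignment `x := e` is simple: `e` contains no variable assigned by `a`. -/
def Act.isSimpleA {VB VN : Type} (a : Act VB VN) (e : LinExpr VN) : Prop :=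
  ∀ y, a.assignsN y → e.coeff y = 0

/-- An action is eligible for rolling. -/
def Act.eligible {VB VN : Type} (a : Act VB VN) : Prop :=
  (∀ v, PropCond.isFalse v ∈ a.preB → a.effB v ≠ some true) ∧
  (∀ v, PropCond.isTrue v ∈ a.preB → a.effB v ≠ some false) ∧
  (∀ x e, a.effN x = some e → a.isIncr x e ∨ a.isSimpleA e) ∧
  (∃ x e, a.effN x = some e ∧ a.isIncr x e)

/-- A state: values of the Boolean and numeric variables. -/
structure PState (VB VN : Type) where
  boolVal : VB → Bool
  numVal : VN → ℚ

/-- `a` is executable in `s`: all preconditions of `a` hold in `s`. -/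
def Act.execIn {VB VN : Type} [Fintype VN] (a : Act VB VN) (s : PState VB VN) : Prop :=
  (∀ c ∈ a.preB, c.holds s.boolVal) ∧ (∀ c ∈ a.preN, c.holds s.numVal)

/-- The result of executing `a` in `s`. -/
def Act.result {VB VN : Type} [Fintype VN] (a : Act VB VN) (s : PState VB VN) : PState VB VN where
  boolVal := fun v => (a.effB v).getD (s.boolVal v)
  numVal := fun x =>
    match a.effN x with
    | none => s.numVal x
    | some e => e.eval s.numVal

/-- Execution of a sequence of actions: `some` of the last induced state if the
sequence is executable, `none` otherwise. -/
noncomputable def execSeq {VB VN A : Type} [Fintype VN] (acts : A → Act VB VN) :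
    List A → PState VB VN → Option (PState VB VN)
  | [], s => some s
  | a :: rest, s =>
      if (acts a).execIn s then execSeq acts rest ((acts a).result s) else none

/-- Goal formulas: propositional combinations of propositional and numeric conditions. -/
inductive Formula (VB VN : Type)
  | prop (c : PropCond VB)
  | num (c : NumCond VN)
  | not (f : Formula VB VN)
  | and (f g : Formula VB VN)
  | or (f g : Formula VB VN)

def Formula.holds {VB VN : Type} [Fintype VN] :
    Formula VB VN → (VB → Bool) → (VN → ℚ) → Prop
  | .prop c, β, _ => c.holds β
  | .num c, _, ν => c.holds ν
  | .not f, β, ν => ¬ f.holds β ν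
  | .and f g, β, ν => f.holds β ν ∧ g.holds β ν
  | .or f g, β, ν => f.holds β ν ∨ g.holds β ν

/-- A numeric planning problem `Π = ⟨V_B, V_N, A, I, G⟩` (the sets of variables and
of actions are the types `VB`, `VN`, `A`). -/
structure Problem (VB VN A : Type) where
  acts : A → Act VB VN
  init : PState VB VN
  goals : List (Formula VB VN)

def Problem.goalSat {VB VN A : Type} [Fintype VN] (P : Problem VB VN A)
    (β : VB → Bool) (ν : VN → ℚ) : Prop :=
  ∀ f ∈ P.goals, f.holds β ν

/-- `α` is a valid plan for `P`. -/
def Problem.isPlan {VB VN A : Type} [Fintype VN] (P : Problem VB VN A) (α : List A) : Prop :=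
  ∃ s, execSeq P.acts α P.init = some s ∧ P.goalSat s.boolVal s.numVal

def Problem.hasPlan {VB VN A : Type} [Fintype VN] (P : Problem VB VN A) : Prop :=
  ∃ α, P.isPlan α

/-! ## ψ[a] : rolled substitution -/

/-- Value of the variable `x` in `ψ[a]` when the action variable of `a` takes value `k`:
`x + (k-1)·ψ₁` for a linear increment `x += ψ₁`, `ψ₁` for a simple assignment `x := ψ₁`,
`x` otherwise. -/
noncomputable def rolledVarVal {VB VN : Type} [Fintype VN] (a : Act VB VN) (k : ℕ)
    (ν : VN → ℚ) (x : VN) : ℚ :=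
  match a.effN x with
  | none => ν x
  | some e =>
      if a.isIncr x e then ν x + ((k : ℚ) - 1) * (incrPart e x).eval ν
      else if a.isSimpleA e then e.eval ν
      else ν x

/-- Value of `ψ[a]` under `ν` when the action variable of `a` takes the value `k`. -/
noncomputable def rolledEval {VB VN : Type} [Fintype VN] (a : Act VB VN) (k : ℕ)
    (ψ : LinExpr VN) (ν : VN → ℚ) : ℚ :=
  (∑ x, ψ.coeff x * rolledVarVal a k ν x) + ψ.const

/-! ## The rolled-up encoding Π^R and the standard encoding Π^S -/

def occursInPre {VB VN : Type} (a : Act VB VN) (x : VN) : Prop :=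
  ∃ c ∈ a.preN, c.expr.coeff x ≠ 0

def occursInEff {VB VN : Type} (a : Act VB VN) (x : VN) : Prop :=
  a.assignsN x ∨ ∃ y e, a.effN y = some e ∧ e.coeff x ≠ 0

/-- Condition under which `mutex^R(A)` contains `a₁ = 0 ∨ a₂ = 0`. -/
def mutexCond {VB VN : Type} (a₁ a₂ : Act VB VN) : Prop :=
  (∃ v, PropCond.isFalse v ∈ a₁.preB ∧ a₂.effB v = some true) ∨
  (∃ v, PropCond.isTrue v ∈ a₁.preB ∧ a₂.effB v = some false) ∨
  (∃ x, a₁.assignsN x ∧ (occursInEff a₂ x ∨ occursInPre a₂ x))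

/-- The symbolic transition relation `T^R(X,A,X')` of the rolled-up encoding, as a
predicate on the values `β,ν` for `X`, `u` for the (ℕ-valued) action variables `A`,
and `β',ν'` for `X'`. -/
def TR {VB VN A : Type} [Fintype VN] (P : Problem VB VN A)
    (β : VB → Bool) (ν : VN → ℚ) (u : A → ℕ) (β' : VB → Bool) (ν' : VN → ℚ) : Prop :=
  -- pre^R(A)
  (∀ a, 0 < u a →
    (∀ v, PropCond.isFalse v ∈ (P.acts a).preB → β v = false) ∧
    (∀ v, PropCond.isTrue v ∈ (P.acts a).preB → β v = true) ∧
    (∀ c ∈ (P.acts a).preN, c.op.holds (c.expr.eval ν))) ∧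
  (∀ a, 1 < u a → ∀ c ∈ (P.acts a).preN,
    c.op.holds (rolledEval (P.acts a) (u a) c.expr ν)) ∧
  -- eff^R(A)
  (∀ a, 0 < u a →
    (∀ v b, (P.acts a).effB v = some b → β' v = b) ∧
    (∀ x e, (P.acts a).effN x = some e →
      ((P.acts a).isIncr x e → ν' x = ν x + (u a : ℚ) * (incrPart e x).eval ν) ∧
      (¬ (P.acts a).isIncr x e → ν' x = e.eval ν))) ∧
  -- frame^R(V_B ∪ V_N)
  (∀ v, (∀ a, (P.acts a).assignsB v → u a = 0) → β' v = β v) ∧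
  (∀ x, (∀ a, (P.acts a).assignsN x → u a = 0) → ν' x = ν x) ∧
  -- mutex^R(A)
  (∀ a₁ a₂, a₁ ≠ a₂ → mutexCond (P.acts a₁) (P.acts a₂) → u a₁ = 0 ∨ u a₂ = 0) ∧
  -- amo^R(A)
  (∀ a, ¬ (P.acts a).eligible → u a ≤ 1)

/-- The symbolic transition relation `T^S` of the standard encoding: `T^R` plus
`a = 0 ∨ a = 1` for every action. -/
def TS {VB VN A : Type} [Fintype VN] (P : Problem VB VN A)
    (β : VB → Bool) (ν : VN → ℚ) (u : A → ℕ) (β' : VB → Bool) (ν' : VN → ℚ) : Prop :=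
  TR P β ν u β' ν' ∧ ∀ a, u a ≤ 1

/-- A (candidate) model of `Π^R_n` / `Π^S_n` : values for the `n+1` copies of the state
variables and the `n` copies of the ℕ-valued action variables. -/
structure RModel (VB VN A : Type) (n : ℕ) where
  β : Fin (n + 1) → VB → Bool
  ν : Fin (n + 1) → VN → ℚ
  u : Fin n → A → ℕ

def RModel.validWith {VB VN A : Type} {n : ℕ} [Fintype VN] (m : RModel VB VN A n)
    (P : Problem VB VN A)
    (T : (VB → Bool) → (VN → ℚ) → (A → ℕ) → (VB → Bool) → (VN → ℚ) → Prop) : Prop :=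
  m.β 0 = P.init.boolVal ∧ m.ν 0 = P.init.numVal ∧
  (∀ i : Fin n, T (m.β i.castSucc) (m.ν i.castSucc) (m.u i) (m.β i.succ) (m.ν i.succ)) ∧
  P.goalSat (m.β (Fin.last n)) (m.ν (Fin.last n))

/-- `m` is a model of `Π^R_n`. -/
def RModel.validR {VB VN A : Type} {n : ℕ} [Fintype VN] (m : RModel VB VN A n)
    (P : Problem VB VN A) : Prop :=
  m.validWith P (TR P)

/-- `m` is a model of `Π^S_n`. -/
def RModel.validS {VB VN A : Type} {n : ℕ} [Fintype VN] (m : RModel VB VN A n)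
    (P : Problem VB VN A) : Prop :=
  m.validWith P (TS P)

/-- The decoding of the rolled-up/standard encoding: the sequences in which each
action `a` occurs `u a` times consecutively. -/
def decodesRolled {A : Type} (u : A → ℕ) (α : List A) : Prop :=
  ∃ l : List A, l.Nodup ∧ (∀ a, a ∈ l) ∧
    α = l.flatMap (fun a => List.replicate (u a) a)

/-- The sequences of actions associated to the model `m` of `Π^R_n`/`Π^S_n`
(the set `(Π^R_n)⁻¹` is the union of `m.plans` over the models `m`). -/
def RModel.plans {VB VN A : Type} {n : ℕ} (m : RModel VB VN A n) (α : List A) : Prop :=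
  ∃ αs : Fin n → List A, (∀ i, decodesRolled (m.u i) (αs i)) ∧ α = (List.ofFn αs).flatten

/-- `Π^R_n` is satisfiable. -/
def satR {VB VN A : Type} [Fintype VN] (P : Problem VB VN A) (n : ℕ) : Prop :=
  ∃ m : RModel VB VN A n, m.validR P

/-- `Π^S_n` is satisfiable. -/
def satS {VB VN A : Type} [Fintype VN] (P : Problem VB VN A) (n : ℕ) : Prop :=
  ∃ m : RModel VB VN A n, m.validS P

/-! ## The R²∃ <-encoding Π^< -/

/-- Value of `v^{≪,·}` after chaining through the actions of `l`:
the last auxiliary variable of an action of `l` assigning `v`, else the initial value. -/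
noncomputable def chainB {VB VN A : Type} (acts : A → Act VB VN) (l : List A)
    (β : VB → Bool) (aux : A → VB → Bool) (v : VB) : Bool :=
  l.foldl (fun val b => if ((acts b).effB v).isSome then aux b v else val) (β v)

noncomputable def chainN {VB VN A : Type} (acts : A → Act VB VN) (l : List A)
    (ν : VN → ℚ) (aux : A → VN → ℚ) (x : VN) : ℚ :=
  l.foldl (fun val b => if ((acts b).effN x).isSome then aux b x else val) (ν x)

/-- The actions strictly preceding `a` in the total order `ord`. -/
noncomputable def before {A : Type} (ord : List A) (a : A) : List A :=
  ord.takeWhile (fun b => decide (b ≠ a))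

/-- The symbolic transition relation `T^<(X,A,X')` of the R²∃ `<`-encoding.
`actb` gives the values of the Boolean action variables, `auxB`/`auxN` the values of the
fresh state variables `v^a`. -/
def Tlt {VB VN A : Type} [Fintype VN] (P : Problem VB VN A) (ord : List A)
    (β : VB → Bool) (ν : VN → ℚ) (actb : A → Bool)
    (auxB : A → VB → Bool) (auxN : A → VN → ℚ)
    (β' : VB → Bool) (ν' : VN → ℚ) : Prop :=
  -- pre^<(A)
  (∀ a, actb a = true →
    (∀ v, PropCond.isFalse v ∈ (P.acts a).preB →
      chainB P.acts (before ord a) β auxB v = false) ∧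
    (∀ v, PropCond.isTrue v ∈ (P.acts a).preB →
      chainB P.acts (before ord a) β auxB v = true) ∧
    (∀ c ∈ (P.acts a).preN,
      c.op.holds (c.expr.eval (chainN P.acts (before ord a) ν auxN)))) ∧
  -- eff^<(A)
  (∀ a v b, (P.acts a).effB v = some b →
    (actb a = true → auxB a v = b) ∧
    (actb a = false → auxB a v = chainB P.acts (before ord a) β auxB v)) ∧
  (∀ a x e, (P.acts a).effN x = some e →
    (actb a = true → auxN a x = e.eval (chainN P.acts (before ord a) ν auxN)) ∧
    (actb a = false → auxN a x = chainN P.acts (before ord a) ν auxN x)) ∧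
  -- frame^<(V_B ∪ V_N)
  (∀ v, β' v = chainB P.acts ord β auxB v) ∧
  (∀ x, ν' x = chainN P.acts ord ν auxN x)

/-- A (candidate) model of `Π^<_n`. -/
structure LtModel (VB VN A : Type) (n : ℕ) where
  β : Fin (n + 1) → VB → Bool
  ν : Fin (n + 1) → VN → ℚ
  actb : Fin n → A → Bool
  auxB : Fin n → A → VB → Bool
  auxN : Fin n → A → VN → ℚ

def LtModel.valid {VB VN A : Type} {n : ℕ} [Fintype VN] (m : LtModel VB VN A n)
    (P : Problem VB VN A) (ord : List A) : Prop :=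
  m.β 0 = P.init.boolVal ∧ m.ν 0 = P.init.numVal ∧
  (∀ i : Fin n, Tlt P ord (m.β i.castSucc) (m.ν i.castSucc) (m.actb i)
      (m.auxB i) (m.auxN i) (m.β i.succ) (m.ν i.succ)) ∧
  P.goalSat (m.β (Fin.last n)) (m.ν (Fin.last n))

/-- The plan decoded from a model of `Π^<_n`: at each step, the actions of `ord`
whose Boolean action variable is true, in the order of `ord`. -/
def LtModel.plan {VB VN A : Type} {n : ℕ} (m : LtModel VB VN A n) (ord : List A) : List A :=
  (List.ofFn fun i : Fin n => ord.filter (m.actb i)).flatten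

/-- `Π^<_n` is satisfiable. -/
def satLt {VB VN A : Type} [Fintype VN] (P : Problem VB VN A) (ord : List A) (n : ℕ) : Prop :=
  ∃ m : LtModel VB VN A n, m.valid P ord

/-! ## The pattern ≺-encoding Π^≺ -/

/-- `σ^{≺₁}(v)` for Boolean `v`, where `≺₁` is the prefix of `pat` of length `j`
(`act j` is the value of the action variable of the `j`-th occurrence in the pattern). -/
noncomputable def sigB {VB VN A : Type} (acts : A → Act VB VN) (pat : List A)
    (act : ℕ → ℕ) (β : VB → Bool) : ℕ → VB → Bool
  | 0 => β
  | j + 1 => fun v =>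
      match pat[j]? with
      | none => sigB acts pat act β j v
      | some a =>
          match (acts a).effB v with
          | some true => sigB acts pat act β j v || decide (0 < act j)
          | some false => sigB acts pat act β j v && decide (act j = 0)
          | none => sigB acts pat act β j v

/-- `σ^{≺₁}(x)` for numeric `x` (`aux j` gives the values of the fresh variables
`x^{≺₁;a}` introduced for the general assignments of the `j`-th occurrence). -/
noncomputable def sigN {VB VN A : Type} [Fintype VN] (acts : A → Act VB VN) (pat : List A)
    (act : ℕ → ℕ) (aux : ℕ → VN → ℚ) (ν : VN → ℚ) : ℕ → VN → ℚ
  | 0 => ν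
  | j + 1 => fun x =>
      match pat[j]? with
      | none => sigN acts pat act aux ν j x
      | some a =>
          match (acts a).effN x with
          | none => sigN acts pat act aux ν j x
          | some e =>
              if (acts a).isIncr x e then
                sigN acts pat act aux ν j x +
                  (act j : ℚ) * (incrPart e x).eval (sigN acts pat act aux ν j)
              else aux j x

/-- The symbolic transition relation `T^≺(X,A,X')` of the pattern `≺`-encoding. -/
def Tpat {VB VN A : Type} [Fintype VN] (P : Problem VB VN A) (pat : List A)
    (β : VB → Bool) (ν : VN → ℚ) (act : ℕ → ℕ) (aux : ℕ → VN → ℚ)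
    (β' : VB → Bool) (ν' : VN → ℚ) : Prop :=
  (∀ (j : ℕ) (hj : j < pat.length),
    -- pre^≺(A)
    (∀ v, PropCond.isFalse v ∈ (P.acts (pat.get ⟨j, hj⟩)).preB → 0 < act j →
      sigB P.acts pat act β j v = false) ∧
    (∀ v, PropCond.isTrue v ∈ (P.acts (pat.get ⟨j, hj⟩)).preB → 0 < act j →
      sigB P.acts pat act β j v = true) ∧
    (∀ c ∈ (P.acts (pat.get ⟨j, hj⟩)).preN,
      (0 < act j → c.op.holds (c.expr.eval (sigN P.acts pat act aux ν j))) ∧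
      (1 < act j → c.op.holds
        (rolledEval (P.acts (pat.get ⟨j, hj⟩)) (act j) c.expr (sigN P.acts pat act aux ν j)))) ∧
    -- eff^≺(A) (for the general assignments)
    (∀ x e, (P.acts (pat.get ⟨j, hj⟩)).effN x = some e →
      ¬ (P.acts (pat.get ⟨j, hj⟩)).isIncr x e →
      (act j = 0 → aux j x = sigN P.acts pat act aux ν j x) ∧
      (0 < act j → aux j x = e.eval (sigN P.acts pat act aux ν j))) ∧
    -- amo^≺(A)
    (¬ (P.acts (pat.get ⟨j, hj⟩)).eligible → act j ≤ 1)) ∧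
  -- frame^≺(V_B ∪ V_N)
  (∀ v, β' v = sigB P.acts pat act β pat.length v) ∧
  (∀ x, ν' x = sigN P.acts pat act aux ν pat.length x)

/-- The sequence decoded from the values `act` of the action variables of the pattern:
the `j`-th occurrence repeated `act j` times, in the order of the pattern. -/
def decodePat {A : Type} (pat : List A) (act : ℕ → ℕ) : List A :=
  (List.ofFn fun j : Fin pat.length => List.replicate (act j.val) (pat.get j)).flatten

/-- A (candidate) model of `Π^≺_n`. -/
structure PatModel (VB VN A : Type) (n : ℕ) where
  β : Fin (n + 1) → VB → Bool
  ν : Fin (n + 1) → VN → ℚ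
  act : Fin n → ℕ → ℕ
  aux : Fin n → ℕ → VN → ℚ

def PatModel.valid {VB VN A : Type} {n : ℕ} [Fintype VN] (m : PatModel VB VN A n)
    (P : Problem VB VN A) (pat : List A) : Prop :=
  m.β 0 = P.init.boolVal ∧ m.ν 0 = P.init.numVal ∧
  (∀ i : Fin n, Tpat P pat (m.β i.castSucc) (m.ν i.castSucc) (m.act i) (m.aux i)
      (m.β i.succ) (m.ν i.succ)) ∧
  P.goalSat (m.β (Fin.last n)) (m.ν (Fin.last n))

/-- The plan decoded from a model of `Π^≺_n`. -/
def PatModel.plan {VB VN A : Type} {n : ℕ} (m : PatModel VB VN A n) (pat : List A) : List A :=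
  (List.ofFn fun i : Fin n => decodePat pat (m.act i)).flatten

/-- `Π^≺_n` is satisfiable. -/
def satPat {VB VN A : Type} [Fintype VN] (P : Problem VB VN A) (pat : List A) (n : ℕ) : Prop :=
  ∃ m : PatModel VB VN A n, m.valid P pat

/-! ## Abstract encodings -/

/-- An abstract encoding `Π^E = ⟨X, A, I(X), T(X,A,X'), G(X)⟩` of a problem:
`XAsgn` is the type of assignments to the state variables `X ⊇ V_B ∪ V_N`
(with projections giving the values of the variables of `V_B ∪ V_N`), `AAsgn` the type
of assignments to the action variables, `T` the symbolic transition relation and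
`decode` its decoding function, associating at least one action sequence to each model. -/
structure Encoding (VB VN A : Type) where
  XAsgn : Type
  AAsgn : Type
  projB : XAsgn → VB → Bool
  projN : XAsgn → VN → ℚ
  T : XAsgn → AAsgn → XAsgn → Prop
  decode : XAsgn → AAsgn → XAsgn → List A → Prop
  decode_exists : ∀ x u x', T x u x' → ∃ α, decode x u x' α

def Encoding.stateOf {VB VN A : Type} (E : Encoding VB VN A) (x : E.XAsgn) : PState VB VN :=
  ⟨E.projB x, E.projN x⟩

/-- The symbolic transition relation of `E` is correct: every action sequence
corresponding to a model of `T` is executable in the state given by the model and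
leads to the state given by the primed variables. -/
def Encoding.correctT {VB VN A : Type} [Fintype VN] (E : Encoding VB VN A)
    (P : Problem VB VN A) : Prop :=
  ∀ x u x', E.T x u x' → ∀ α, E.decode x u x' α →
    execSeq P.acts α (E.stateOf x) = some (E.stateOf x')

/-- A (candidate) model of `Π^E_n`. -/
structure EncModel {VB VN A : Type} (E : Encoding VB VN A) (n : ℕ) where
  xs : Fin (n + 1) → E.XAsgn
  us : Fin n → E.AAsgn

def EncModel.valid {VB VN A : Type} [Fintype VN] {E : Encoding VB VN A} {n : ℕ}
    (m : EncModel E n) (P : Problem VB VN A) : Prop :=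
  E.projB (m.xs 0) = P.init.boolVal ∧ E.projN (m.xs 0) = P.init.numVal ∧
  (∀ i : Fin n, E.T (m.xs i.castSucc) (m.us i) (m.xs i.succ)) ∧
  P.goalSat (E.projB (m.xs (Fin.last n))) (E.projN (m.xs (Fin.last n)))

/-- The action sequences associated to a model of `Π^E_n`
(`(Π^E_n)⁻¹` is the union of `m.plans` over the models `m` of `Π^E_n`). -/
def EncModel.plans {VB VN A : Type} {E : Encoding VB VN A} {n : ℕ}
    (m : EncModel E n) (α : List A) : Prop :=
  ∃ αs : Fin n → List A,
    (∀ i, E.decode (m.xs i.castSucc) (m.us i) (m.xs i.succ) (αs i)) ∧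
    α = (List.ofFn αs).flatten

/-- The quantity `Δ` for an action `a` and an expression `ψ`: the sum, over the linear
increments `x += ψ₁` of `a` with `x` occurring in `ψ`, of `ψ₁` weighted by the coefficient
of `x` in `ψ`. -/
noncomputable def deltaVal {VB VN : Type} [Fintype VN] (a : Act VB VN)
    (ψ : LinExpr VN) (ν : VN → ℚ) : ℚ :=
  ∑ x, ψ.coeff x *
    (match a.effN x with
     | some e => if a.isIncr x e then (incrPart e x).eval ν else 0
     | none => 0)

lemma eval_congr' {VN : Type} [Fintype VN] (e : LinExpr VN) {ν₁ ν₂ : VN → ℚ}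
    (h : ∀ x, e.coeff x ≠ 0 → ν₁ x = ν₂ x) : e.eval ν₁ = e.eval ν₂ := by
  unfold LinExpr.eval
  congr 1
  apply Finset.sum_congr rfl
  intro x _
  by_cases hx : e.coeff x = 0
  · simp [hx]
  · rw [h x hx]

lemma incr_eval' {VN : Type} [Fintype VN] (e : LinExpr VN) (x : VN) (hx : e.coeff x = 1)
    (ν : VN → ℚ) : ν x + (incrPart e x).eval ν = e.eval ν := by
  unfold LinExpr.eval incrPart
  have h1 : ∑ y, e.coeff y * ν y
      = e.coeff x * ν x + ∑ y ∈ Finset.univ.erase x, e.coeff y * ν y :=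
    (Finset.add_sum_erase _ _ (Finset.mem_univ x)).symm
  have h2 : ∑ y, Function.update e.coeff x 0 y * ν y
      = Function.update e.coeff x 0 x * ν x
        + ∑ y ∈ Finset.univ.erase x, Function.update e.coeff x 0 y * ν y :=
    (Finset.add_sum_erase _ _ (Finset.mem_univ x)).symm
  have h3 : ∑ y ∈ Finset.univ.erase x, Function.update e.coeff x 0 y * ν y
      = ∑ y ∈ Finset.univ.erase x, e.coeff y * ν y := by
    apply Finset.sum_congr rfl
    intro y hy
    rw [Function.update_of_ne (Finset.ne_of_mem_erase hy)]
  simp only [h1, h2, h3, Function.update_self, hx]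
  ring

lemma execSeq_append {VB VN A : Type} [Fintype VN] (acts : A → Act VB VN)
    (l₁ l₂ : List A) (s : PState VB VN) :
    execSeq acts (l₁ ++ l₂) s = (execSeq acts l₁ s).bind (execSeq acts l₂) := by
  induction l₁ generalizing s with
  | nil => simp [execSeq]
  | cons a l ih =>
    simp only [List.cons_append, execSeq]
    split_ifs with h
    · exact ih _
    · rfl

lemma exec_chain {VB VN A : Type} [Fintype VN] (acts : A → Act VB VN) :
    ∀ (n : ℕ) (s : Fin (n + 1) → PState VB VN) (αs : Fin n → List A),
    (∀ i : Fin n, execSeq acts (αs i) (s i.castSucc) = some (s i.succ)) →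
    execSeq acts (List.ofFn αs).flatten (s 0) = some (s (Fin.last n)) := by
  intro n
  induction n with
  | zero =>
    intro s αs _
    simp [execSeq, Fin.last]
  | succ n ih =>
    intro s αs h
    rw [List.ofFn_succ, List.flatten_cons, execSeq_append]
    have h0 := h 0
    rw [Fin.castSucc_zero] at h0
    rw [h0, Option.bind_some]
    have := ih (fun i => s i.succ) (fun i => αs i.succ) ?_
    · simpa [Fin.succ_last] using this
    · intro i
      have := h i.succ
      rwa [← Fin.succ_castSucc] at this

lemma step_exec {VB VN A : Type} [Fintype VN] (P : Problem VB VN A)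
    (β : VB → Bool) (ν : VN → ℚ) (u : A → ℕ) (β' : VB → Bool) (ν' : VN → ℚ)
    (hT : TS P β ν u β' ν')
    (l : List A) (hnd : l.Nodup) (hall : ∀ a, a ∈ l) :
    execSeq P.acts (l.flatMap fun a => List.replicate (u a) a) ⟨β, ν⟩ = some ⟨β', ν'⟩ := by
  obtain ⟨⟨hpre, _, heff, hfB, hfN, hmux, _⟩, hle⟩ := hT
  suffices H : ∀ l₂ : List A, l₂.Nodup → ∀ s : PState VB VN,
      (∀ v, ((∃ a, a ∉ l₂ ∧ 0 < u a ∧ (P.acts a).assignsB v) → s.boolVal v = β' v) ∧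
            ((∀ a, a ∉ l₂ → 0 < u a → ¬ (P.acts a).assignsB v) → s.boolVal v = β v)) →
      (∀ x, ((∃ a, a ∉ l₂ ∧ 0 < u a ∧ (P.acts a).assignsN x) → s.numVal x = ν' x) ∧
            ((∀ a, a ∉ l₂ → 0 < u a → ¬ (P.acts a).assignsN x) → s.numVal x = ν x)) →
      execSeq P.acts (l₂.flatMap fun a => List.replicate (u a) a) s = some ⟨β', ν'⟩ by
    apply H l hnd ⟨β, ν⟩
    · intro v
      exact ⟨fun ⟨a, ha, _, _⟩ => absurd (hall a) ha, fun _ => rfl⟩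
    · intro x
      exact ⟨fun ⟨a, ha, _, _⟩ => absurd (hall a) ha, fun _ => rfl⟩
  intro l₂
  induction l₂ with
  | nil =>
    intro _ s hB hN
    simp only [List.flatMap_nil, execSeq]
    congr 1
    have hb : s.boolVal = β' := by
      funext v
      by_cases h : ∃ a, 0 < u a ∧ (P.acts a).assignsB v
      · obtain ⟨a, h1, h2⟩ := h
        exact (hB v).1 ⟨a, by simp, h1, h2⟩
      · push_neg at h
        have h' : ∀ a, (P.acts a).assignsB v → u a = 0 := by
          intro a ha
          by_contra hc
          exact h a (Nat.pos_of_ne_zero hc) ha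
        rw [(hB v).2 (fun a _ hu => h a hu), hfB v h']
    have hn : s.numVal = ν' := by
      funext x
      by_cases h : ∃ a, 0 < u a ∧ (P.acts a).assignsN x
      · obtain ⟨a, h1, h2⟩ := h
        exact (hN x).1 ⟨a, by simp, h1, h2⟩
      · push_neg at h
        have h' : ∀ a, (P.acts a).assignsN x → u a = 0 := by
          intro a ha
          by_contra hc
          exact h a (Nat.pos_of_ne_zero hc) ha
        rw [(hN x).2 (fun a _ hu => h a hu), hfN x h']
    cases s
    simp only at hb hn
    rw [hb, hn]
  | cons a l₂ ih =>
    intro hnd s hB hN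
    have hal : a ∉ l₂ := (List.nodup_cons.mp hnd).1
    have hnd2 := (List.nodup_cons.mp hnd).2
    simp only [List.flatMap_cons]
    rcases Nat.lt_or_ge (u a) 1 with h0 | h1
    · have h0 : u a = 0 := by omega
      rw [h0]
      simp only [List.replicate_zero, List.nil_append]
      apply ih hnd2 s
      · intro v
        constructor
        · rintro ⟨b, hb1, hb2, hb3⟩
          refine (hB v).1 ⟨b, ?_, hb2, hb3⟩
          intro hm
          rcases List.mem_cons.mp hm with h | h
          · subst h; omega
          · exact hb1 h
        · intro h
          exact (hB v).2 fun b hb hub => h b (fun hm => hb (List.mem_cons_of_mem a hm)) hub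
      · intro x
        constructor
        · rintro ⟨b, hb1, hb2, hb3⟩
          refine (hN x).1 ⟨b, ?_, hb2, hb3⟩
          intro hm
          rcases List.mem_cons.mp hm with h | h
          · subst h; omega
          · exact hb1 h
        · intro h
          exact (hN x).2 fun b hb hub => h b (fun hm => hb (List.mem_cons_of_mem a hm)) hub
    · have hua : u a = 1 := le_antisymm (hle a) h1
      have hupos : 0 < u a := by omega
      rw [hua]
      simp only [List.replicate_one, List.singleton_append, execSeq]
      -- executability of a in s
      have hexB : ∀ c ∈ (P.acts a).preB, c.holds s.boolVal := by
        intro c hc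
        cases c with
        | isTrue v =>
          show s.boolVal v = true
          by_cases hv : ∃ b, b ∉ a :: l₂ ∧ 0 < u b ∧ (P.acts b).assignsB v
          · obtain ⟨b, hb1, hb2, hb3⟩ := hv
            have hba : b ≠ a := fun h => hb1 (h ▸ (List.mem_cons_self : a ∈ a :: l₂))
            obtain ⟨bo, hbo⟩ := Option.ne_none_iff_exists'.mp hb3
            cases bo with
            | false =>
              have hmc : mutexCond (P.acts a) (P.acts b) := Or.inr (Or.inl ⟨v, hc, hbo⟩)
              rcases hmux a b (Ne.symm hba) hmc with h | h <;> omega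
            | true =>
              rw [(hB v).1 ⟨b, hb1, hb2, hb3⟩]
              exact (heff b hb2).1 v true hbo
          · push_neg at hv
            rw [(hB v).2 (fun b hb hub => hv b hb hub)]
            exact (hpre a hupos).2.1 v hc
        | isFalse v =>
          show s.boolVal v = false
          by_cases hv : ∃ b, b ∉ a :: l₂ ∧ 0 < u b ∧ (P.acts b).assignsB v
          · obtain ⟨b, hb1, hb2, hb3⟩ := hv
            have hba : b ≠ a := fun h => hb1 (h ▸ (List.mem_cons_self : a ∈ a :: l₂))
            obtain ⟨bo, hbo⟩ := Option.ne_none_iff_exists'.mp hb3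
            cases bo with
            | true =>
              have hmc : mutexCond (P.acts a) (P.acts b) := Or.inl ⟨v, hc, hbo⟩
              rcases hmux a b (Ne.symm hba) hmc with h | h <;> omega
            | false =>
              rw [(hB v).1 ⟨b, hb1, hb2, hb3⟩]
              exact (heff b hb2).1 v false hbo
          · push_neg at hv
            rw [(hB v).2 (fun b hb hub => hv b hb hub)]
            exact (hpre a hupos).1 v hc
      have hexN : ∀ c ∈ (P.acts a).preN, c.holds s.numVal := by
        intro c hc
        have hagree : ∀ x, c.expr.coeff x ≠ 0 → s.numVal x = ν x := by
          intro x hx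
          apply (hN x).2
          intro b hb hub hassign
          have hba : b ≠ a := fun h => hb (h ▸ (List.mem_cons_self : a ∈ a :: l₂))
          have hmc : mutexCond (P.acts b) (P.acts a) :=
            Or.inr (Or.inr ⟨x, hassign, Or.inr ⟨c, hc, hx⟩⟩)
          rcases hmux b a hba hmc with h | h <;> omega
        show c.op.holds (c.expr.eval s.numVal)
        rw [eval_congr' c.expr hagree]
        exact (hpre a hupos).2.2 c hc
      have hex : (P.acts a).execIn s := ⟨hexB, hexN⟩
      rw [if_pos hex]
      apply ih hnd2 ((P.acts a).result s)
      · intro v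
        constructor
        · rintro ⟨b, hb1, hb2, hb3⟩
          show ((P.acts a).effB v).getD (s.boolVal v) = β' v
          cases hbo : (P.acts a).effB v with
          | some bo =>
            simp only [Option.getD_some]
            exact ((heff a hupos).1 v bo hbo).symm
          | none =>
            simp only [Option.getD_none]
            have hba : b ≠ a := by
              intro h; subst h
              exact hb3 hbo
            refine (hB v).1 ⟨b, ?_, hb2, hb3⟩
            intro hm
            rcases List.mem_cons.mp hm with h | h
            · exact hba h
            · exact hb1 h
        · intro h
          show ((P.acts a).effB v).getD (s.boolVal v) = β v
          have hnone : (P.acts a).effB v = none := by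
            by_contra hc
            exact h a hal hupos hc
          rw [hnone, Option.getD_none]
          exact (hB v).2 fun b hb hub => h b (fun hm => hb (List.mem_cons_of_mem a hm)) hub
      · intro x
        constructor
        · rintro ⟨b, hb1, hb2, hb3⟩
          show (match (P.acts a).effN x with
                | none => s.numVal x
                | some e => e.eval s.numVal) = ν' x
          cases he : (P.acts a).effN x with
          | some e =>
            simp only []
            have hagree : ∀ y, e.coeff y ≠ 0 → s.numVal y = ν y := by
              intro y hy
              apply (hN y).2
              intro b' hb' hub' hassign'
              have hba : b' ≠ a := fun h => hb' (h ▸ (List.mem_cons_self : a ∈ a :: l₂))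
              have hmc : mutexCond (P.acts b') (P.acts a) :=
                Or.inr (Or.inr ⟨y, hassign', Or.inl (Or.inr ⟨x, e, he, hy⟩)⟩)
              rcases hmux b' a hba hmc with h | h <;> omega
            rw [eval_congr' e hagree]
            by_cases hincr : (P.acts a).isIncr x e
            · have h1 := ((heff a hupos).2 x e he).1 hincr
              rw [h1, hua]
              push_cast
              rw [one_mul]
              exact (incr_eval' e x hincr.1 ν).symm ▸ (incr_eval' e x hincr.1 ν)
            · exact (((heff a hupos).2 x e he).2 hincr).symm
          | none =>
            simp only []
            have hba : b ≠ a := by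
              intro h; subst h
              exact hb3 he
            refine (hN x).1 ⟨b, ?_, hb2, hb3⟩
            intro hm
            rcases List.mem_cons.mp hm with h | h
            · exact hba h
            · exact hb1 h
        · intro h
          show (match (P.acts a).effN x with
                | none => s.numVal x
                | some e => e.eval s.numVal) = ν x
          have hnone : (P.acts a).effN x = none := by
            by_contra hc
            exact h a hal hupos hc
          rw [hnone]
          exact (hN x).2 fun b hb hub => h b (fun hm => hb (List.mem_cons_of_mem a hm)) hub

/-- the standard encoding `Π^S` is correct: for every bound `n`,
every action sequence in `(Π^S_n)⁻¹` is a valid plan. -/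
theorem standard_encoding_correct
    {VB VN A : Type} [Fintype VB] [Fintype VN] [Fintype A]
    (P : Problem VB VN A) (n : ℕ) (m : RModel VB VN A n) (hm : m.validS P)
    (α : List A) (hα : m.plans α) :
    P.isPlan α := by
  obtain ⟨hβ0, hν0, hT, hgoal⟩ := hm
  obtain ⟨αs, hdec, hflat⟩ := hα
  have hstep : ∀ i : Fin n,
      execSeq P.acts (αs i) ⟨m.β i.castSucc, m.ν i.castSucc⟩ =
        some ⟨m.β i.succ, m.ν i.succ⟩ := by
    intro i
    obtain ⟨l, hnd, hall, hαi⟩ := hdec i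
    rw [hαi]
    exact step_exec P _ _ _ _ _ (hT i) l hnd hall
  have hchain := exec_chain P.acts n (fun i => ⟨m.β i, m.ν i⟩) αs hstep
  refine ⟨⟨m.β (Fin.last n), m.ν (Fin.last n)⟩, ?_, hgoal⟩
  rw [hflat]
  have hinit : (⟨m.β 0, m.ν 0⟩ : PState VB VN) = P.init := by
    rw [hβ0, hν0]
  rw [← hinit]
  exact hchain
end PatternPlanning
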